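/- For every real number t > 0, one has the identity Re(G(t)·Γ(it)) = (4/π^{3/2}) · |Γ(3/4 + it/2)|² · cosh(πt/2) · Q(t)/(2t). -/

import Mathlib

open MeasureTheory

private lemma beta_eq (t : ℝ) (ht : 0 < t) :
    Complex.betaIntegral (1 + Complex.I * t) (3 / 2) =
      ((∫ s in (0:ℝ)..1, Real.cos (t * Real.log s) * Real.sqrt (1 - s) : ℝ) : ℂ) +
        ((∫ s in (0:ℝ)..1, Real.sin (t * Real.log s) * Real.sqrt (1 - s) : ℝ) : ℂ) *
          Complex.I := by
  have hu : 0 < Complex.re (1 + Complex.I * t) := by simp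
  have hv : 0 < Complex.re (3 / 2 : ℂ) := by norm_num
  set f : ℝ → ℂ := fun s : ℝ =>
    (s : ℂ) ^ (1 + Complex.I * t - 1) * ((1 : ℂ) - s) ^ ((3 / 2 : ℂ) - 1) with hf
  set g : ℝ → ℂ := fun s : ℝ =>
    ((Real.cos (t * Real.log s) * Real.sqrt (1 - s) : ℝ) : ℂ) +
      ((Real.sin (t * Real.log s) * Real.sqrt (1 - s) : ℝ) : ℂ) * Complex.I with hg
  have hInt : IntervalIntegrable f volume 0 1 := Complex.betaIntegral_convergent hu hv
  have hIoc : IntegrableOn f (Set.Ioc (0:ℝ) 1) volume := hInt.1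
  have hfeq : Set.EqOn f g (Set.Ioc (0:ℝ) 1) := by
    intro s hs
    have hs0 : (0:ℝ) < s := hs.1
    have hs1 : (0:ℝ) ≤ 1 - s := by linarith [hs.2]
    have h1 : (s : ℂ) ^ (1 + Complex.I * t - 1)
        = ((Real.cos (t * Real.log s) : ℝ) : ℂ)
          + ((Real.sin (t * Real.log s) : ℝ) : ℂ) * Complex.I := by
      rw [show (1 : ℂ) + Complex.I * t - 1 = Complex.I * t by ring,
        Complex.cpow_def_of_ne_zero (by exact_mod_cast hs0.ne'),
        ← Complex.ofReal_log hs0.le,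
        show (Real.log s : ℂ) * (Complex.I * t) = ((t * Real.log s : ℝ) : ℂ) * Complex.I by
          push_cast; ring,
        Complex.exp_mul_I, ← Complex.ofReal_cos, ← Complex.ofReal_sin]
    have h2 : ((1:ℂ) - s) ^ ((3/2:ℂ) - 1) = ((Real.sqrt (1 - s) : ℝ) : ℂ) := by
      rw [show ((3/2:ℂ) - 1) = ((1/2:ℝ):ℂ) by norm_num,
        show ((1:ℂ) - s) = (((1 - s : ℝ)) : ℂ) by push_cast; ring,
        ← Complex.ofReal_cpow hs1, Real.sqrt_eq_rpow]
    simp only [hf, hg, h1, h2]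
    push_cast
    ring
  have hIoc' : IntegrableOn g (Set.Ioc (0:ℝ) 1) volume :=
    hIoc.congr_fun hfeq measurableSet_Ioc
  rw [Complex.betaIntegral, intervalIntegral.integral_of_le zero_le_one,
    intervalIntegral.integral_of_le zero_le_one,
    intervalIntegral.integral_of_le zero_le_one]
  rw [setIntegral_congr_fun measurableSet_Ioc hfeq]
  rw [← setIntegral_re_add_im hIoc']
  have hre : ∀ s : ℝ, RCLike.re (g s) = Real.cos (t * Real.log s) * Real.sqrt (1 - s) := by
    intro s; simp [hg, -Complex.ofReal_cos, -Complex.ofReal_sin]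
  have him : ∀ s : ℝ, RCLike.im (g s) = Real.sin (t * Real.log s) * Real.sqrt (1 - s) := by
    intro s; simp [hg, -Complex.ofReal_cos, -Complex.ofReal_sin]
  simp only [hre, him]
  norm_num

/-- The function `G(t) = (2√2/π) · |Γ(3/4 + it/2)|² · cos(iπt/2 − π/4) / Γ(3/2 + it)`. -/
noncomputable def G (t : ℝ) : ℂ :=
  ((2 * Real.sqrt 2 / Real.pi : ℝ) : ℂ) *
    ((‖Complex.Gamma (3 / 4 + Complex.I * t / 2)‖ : ℝ) : ℂ) ^ 2 *
    Complex.cos (Complex.I * Real.pi * t / 2 - Real.pi / 4) /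
    Complex.Gamma (3 / 2 + Complex.I * t)

/-- The function
`Q(t) = (∫₀¹ cos(t log s)(1−s)^{1/2} ds)(2t + 3 tanh(πt/2))
      + (∫₀¹ sin(t log s)(1−s)^{1/2} ds)(3 − 2t tanh(πt/2))`. -/
noncomputable def Q (t : ℝ) : ℝ :=
  (∫ s in (0:ℝ)..1, Real.cos (t * Real.log s) * Real.sqrt (1 - s)) *
    (2 * t + 3 * Real.tanh (Real.pi * t / 2)) +
  (∫ s in (0:ℝ)..1, Real.sin (t * Real.log s) * Real.sqrt (1 - s)) *
    (3 - 2 * t * Real.tanh (Real.pi * t / 2))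

/-- For `t > 0`,
`Re(G(t)·Γ(it)) = (4/π^{3/2}) · |Γ(3/4 + it/2)|² · cosh(πt/2) · Q(t)/(2t)`. -/
theorem re_G_mul_Gamma_eq (t : ℝ) (ht : 0 < t) :
    (G t * Complex.Gamma (Complex.I * t)).re =
      4 / Real.pi ^ ((3:ℝ)/2) *
        ‖Complex.Gamma (3 / 4 + Complex.I * t / 2)‖ ^ 2 *
        Real.cosh (Real.pi * t / 2) * (Q t / (2 * t)) := by
  have hπ : (0:ℝ) < Real.pi := Real.pi_pos
  have htc : (t:ℂ) ≠ 0 := Complex.ofReal_ne_zero.2 ht.ne'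
  have hIt : Complex.I * t ≠ 0 := mul_ne_zero Complex.I_ne_zero htc
  set x : ℝ := ∫ s in (0:ℝ)..1, Real.cos (t * Real.log s) * Real.sqrt (1 - s) with hxdef
  set y : ℝ := ∫ s in (0:ℝ)..1, Real.sin (t * Real.log s) * Real.sqrt (1 - s) with hydef
  set A : ℝ := ‖Complex.Gamma (3 / 4 + Complex.I * t / 2)‖ with hAdef
  set ch : ℝ := Real.cosh (Real.pi * t / 2) with hchdef
  set sh : ℝ := Real.sinh (Real.pi * t / 2) with hshdef
  have hch : ch ≠ 0 := (Real.cosh_pos _).ne'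
  set D : ℂ := Complex.Gamma (3 / 2 + Complex.I * t) with hDdef
  have hD : D ≠ 0 := by
    apply Complex.Gamma_ne_zero_of_re_pos
    simp
  have hsπ : (0:ℝ) < Real.sqrt Real.pi := Real.sqrt_pos.2 hπ
  have hs2 : Real.sqrt 2 * Real.sqrt 2 = 2 := Real.mul_self_sqrt (by norm_num)
  have hs2c : ((Real.sqrt 2 : ℝ) : ℂ) * ((Real.sqrt 2 : ℝ) : ℂ) = 2 := by
    norm_cast
  -- Gamma(3/2)
  have hΓ32 : Complex.Gamma (3/2 : ℂ) = ((Real.sqrt Real.pi : ℝ) : ℂ) / 2 := by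
    rw [show ((3:ℂ)/2) = ((3/2 : ℝ):ℂ) by norm_num, Complex.Gamma_ofReal,
      show (3/2:ℝ) = 1/2 + 1 by norm_num, Real.Gamma_add_one (by norm_num),
      Real.Gamma_one_half_eq]
    push_cast
    ring
  -- Gamma relation
  have hβ := Complex.Gamma_mul_Gamma_eq_betaIntegral
    (s := 1 + Complex.I * t) (t := 3/2) (by simp) (by norm_num)
  rw [beta_eq t ht, hΓ32] at hβ
  rw [show (1 : ℂ) + Complex.I * t = Complex.I * t + 1 from add_comm _ _,
    Complex.Gamma_add_one _ hIt] at hβ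
  rw [show Complex.I * t + 1 + 3/2 = (3/2 + Complex.I * t) + 1 by ring,
    Complex.Gamma_add_one _ (by
      intro h
      have := congrArg Complex.re h
      simp at this)] at hβ
  rw [← hDdef, ← hxdef, ← hydef] at hβ
  -- hβ : I t Γ(I t) * (√π/2) = ((3/2 + I t) * D) * (x + y I)
  -- cos formula
  have hcos : Complex.cos (Complex.I * (Real.pi:ℂ) * t / 2 - (Real.pi:ℂ) / 4)
      = ((Real.sqrt 2 / 2 : ℝ) : ℂ) * ((ch : ℂ) + (sh : ℂ) * Complex.I) := by
    rw [show Complex.I * (Real.pi:ℂ) * t / 2 - (Real.pi:ℂ) / 4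
        = ((Real.pi * t / 2 : ℝ) : ℂ) * Complex.I - ((Real.pi / 4 : ℝ) : ℂ) by
      push_cast; ring]
    rw [Complex.cos_sub, Complex.cos_mul_I, Complex.sin_mul_I,
      ← Complex.ofReal_cos, ← Complex.ofReal_sin, ← Complex.ofReal_cosh,
      ← Complex.ofReal_sinh, Real.cos_pi_div_four, Real.sin_pi_div_four,
      hchdef, hshdef]
    push_cast
    ring
  -- clean form of G
  have hGt : G t = ((2 / Real.pi : ℝ) : ℂ) * (((A^2 : ℝ)) : ℂ) *
      ((ch : ℂ) + (sh : ℂ) * Complex.I) / D := by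
    rw [G, hcos, ← hAdef, ← hDdef, div_eq_div_iff hD hD]
    push_cast
    linear_combination ((A:ℂ)^2 * ((ch:ℂ) + (sh:ℂ) * Complex.I) * D / (Real.pi:ℂ)) * hs2c
  -- main complex identity
  set Z : ℂ := G t * Complex.Gamma (Complex.I * t) with hZdef
  set K : ℂ := ((2 / Real.pi : ℝ) : ℂ) * (((A^2 : ℝ)) : ℂ) *
      ((ch : ℂ) + (sh : ℂ) * Complex.I) *
      ((3/2 : ℂ) + Complex.I * t) * ((x:ℂ) + (y:ℂ) * Complex.I) * 2 with hKdef
  have hZ : Z * ((Real.sqrt Real.pi * t : ℝ) : ℂ) * Complex.I = K := by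
    rw [hZdef, hKdef, hGt]
    rw [div_mul_eq_mul_div, div_mul_eq_mul_div, div_mul_eq_mul_div, div_eq_iff hD]
    push_cast
    linear_combination (2 * ((Real.pi:ℝ):ℂ)⁻¹ * (A:ℂ)^2 *
      ((ch:ℂ) + (sh:ℂ) * Complex.I) * 2) * hβ
  have hre : Z.re * (Real.sqrt Real.pi * t) = K.im := by
    have := congrArg Complex.im hZ
    simpa using this
  have hKim : K.im = 2 / Real.pi * A^2 *
      (x * (t * ch + 3/2 * sh) + y * (3/2 * ch - t * sh)) * 2 := by
    rw [hKdef]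
    simp [Complex.add_re, Complex.add_im, Complex.mul_re, Complex.mul_im, pow_two]
    ring
  have hπ32 : Real.pi ^ ((3:ℝ)/2) = Real.pi * Real.sqrt Real.pi := by
    rw [show (3:ℝ)/2 = 1 + 1/2 by norm_num, Real.rpow_add hπ, Real.rpow_one,
      ← Real.sqrt_eq_rpow]
  have hZre : Z.re = K.im / (Real.sqrt Real.pi * t) := by
    rw [eq_div_iff (by positivity)]
    exact hre
  rw [hZre, hKim, hπ32, Q, ← hxdef, ← hydef, Real.tanh_eq_sinh_div_cosh,
    ← hchdef, ← hshdef]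
  field_simp
  ring
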